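/- Let n ≥ 4 be even. A rational vector b = (b₁,…,b_n) satisfies the D_n cycle system with marking p = n−1 and excess q = n−1 if and only if b_i = i for all 1 ≤ i ≤ n−2, b_{n−1} = n/2, and b_n = (n−2)/2. In particular the system has a unique rational solution and this solution is integral. -/

import Mathlib

/-- Adjacency in the `D_n` dual graph (`n ≥ 4`): vertices `1, …, n`, with `i` adjacent to
`i+1` for `1 ≤ i ≤ n−3`, and vertex `n−2` adjacent to both `n−1` and `n`. -/
def dnAdj (n i j : ℕ) : Prop :=
  (j = i + 1 ∧ 1 ≤ i ∧ i ≤ n - 3) ∨ (i = j + 1 ∧ 1 ≤ j ∧ j ≤ n - 3) ∨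
  (i = n - 2 ∧ (j = n - 1 ∨ j = n)) ∨ (j = n - 2 ∧ (i = n - 1 ∨ i = n))

instance (n i j : ℕ) : Decidable (dnAdj n i j) := by unfold dnAdj; infer_instance

/-- `b` satisfies the `D_n` cycle system with marking `p` and excess `q`:
for every vertex `i`, `−2b_i + Σ_{j adjacent to i} b_j + δ_{i,p} = −δ_{i,q}`. -/
def dnSystem {R : Type*} [CommRing R] (n p q : ℕ) (b : ℕ → R) : Prop :=
  ∀ i : ℕ, 1 ≤ i → i ≤ n →
    -2 * b i + (∑ j ∈ Finset.Icc 1 n, if dnAdj n i j then b j else 0)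
      + (if i = p then 1 else 0) = -(if i = q then 1 else 0)


open Finset in
lemma dn_filter_one {n : ℕ} (hn : 4 ≤ n) :
    (Icc 1 n).filter (fun j => dnAdj n 1 j) = {2} := by
  ext j
  rw [mem_filter]
  simp only [mem_filter, mem_Icc, mem_singleton, dnAdj, true_and, and_true, true_or, or_true]
  omega

open Finset in
lemma dn_filter_mid {n i : ℕ} (h2 : 2 ≤ i) (h3 : i ≤ n - 3) :
    (Icc 1 n).filter (fun j => dnAdj n i j) = {i - 1, i + 1} := by
  ext j
  rw [mem_filter]
  simp only [mem_filter, mem_Icc, mem_insert, mem_singleton, dnAdj, true_and, and_true,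
    true_or, or_true]
  omega

open Finset in
lemma dn_filter_n2 {n : ℕ} (hn : 4 ≤ n) :
    (Icc 1 n).filter (fun j => dnAdj n (n-2) j) = {n - 3, n - 1, n} := by
  ext j
  simp only [mem_filter, mem_Icc, mem_insert, mem_singleton, dnAdj, true_and, and_true,
    true_or, or_true]
  omega

open Finset in
lemma dn_filter_n1 {n : ℕ} (hn : 4 ≤ n) :
    (Icc 1 n).filter (fun j => dnAdj n (n-1) j) = {n - 2} := by
  ext j
  simp only [mem_filter, mem_Icc, mem_singleton, dnAdj, true_and, and_true, true_or, or_true]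
  omega

open Finset in
lemma dn_filter_nn {n : ℕ} (hn : 4 ≤ n) :
    (Icc 1 n).filter (fun j => dnAdj n n j) = {n - 2} := by
  ext j
  simp only [mem_filter, mem_Icc, mem_singleton, dnAdj, true_and, and_true, true_or, or_true]
  omega

/-- Proposition 4.6.2.b.i (`n` even, `Γ″` meeting `E_{n−1}`): for even `n ≥ 4`, the
`D_n` cycle system with marking `p = n−1` and excess `q = n−1` has the unique
(integral) solution `b_i = i` for `i ≤ n−2`, `b_{n−1} = n/2`, `b_n = (n−2)/2`. -/
theorem dn_cycle_system_right_even (n : ℕ) (hn : 4 ≤ n) (heven : Even n) (b : ℕ → ℚ) :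
    dnSystem n (n - 1) (n - 1) b ↔
      ((∀ i : ℕ, 1 ≤ i → i ≤ n - 2 → b i = (i : ℚ)) ∧
        b (n - 1) = (n : ℚ) / 2 ∧ b n = ((n : ℚ) - 2) / 2) := by
  have hc2 : ((n - 2 : ℕ) : ℚ) = (n : ℚ) - 2 := by
    rw [Nat.cast_sub (by omega)]; norm_num
  have hc3 : ((n - 3 : ℕ) : ℚ) = (n : ℚ) - 3 := by
    rw [Nat.cast_sub (by omega)]; norm_num
  constructor
  · intro h
    -- equation at vertex 1
    have e1 := h 1 (by omega) (by omega)
    rw [← Finset.sum_filter, dn_filter_one hn, Finset.sum_singleton,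
      if_neg (by omega : ¬ (1 = n - 1))] at e1
    -- b i = i * b 1 for 1 ≤ i ≤ n - 2
    have key : ∀ i : ℕ, 1 ≤ i → i ≤ n - 2 → b i = (i : ℚ) * b 1 := by
      intro i
      induction i using Nat.strong_induction_on with
      | _ i ih =>
        intro hi1 hi2
        rcases Nat.lt_or_ge i 3 with hi | hi
        · interval_cases i
          · norm_num
          · push_cast; linarith
        · have em := h (i - 1) (by omega) (by omega)
          rw [← Finset.sum_filter,
            dn_filter_mid (by omega : 2 ≤ i - 1) (by omega : i - 1 ≤ n - 3),
            Finset.sum_pair (by omega : i - 1 - 1 ≠ i - 1 + 1),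
            if_neg (by omega : ¬ (i - 1 = n - 1))] at em
          rw [(by omega : i - 1 - 1 = i - 2), (by omega : i - 1 + 1 = i)] at em
          have hv1 := ih (i - 2) (by omega) (by omega) (by omega)
          have hv2 := ih (i - 1) (by omega) (by omega) (by omega)
          rw [hv1, hv2] at em
          have c1 : ((i - 2 : ℕ) : ℚ) = (i : ℚ) - 2 := by
            rw [Nat.cast_sub (by omega)]; norm_num
          have c2 : ((i - 1 : ℕ) : ℚ) = (i : ℚ) - 1 := by
            rw [Nat.cast_sub (by omega)]; norm_num
          rw [c1, c2] at em
          linarith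
    -- tail equations
    have en2 := h (n - 2) (by omega) (by omega)
    rw [← Finset.sum_filter, dn_filter_n2 hn,
      Finset.sum_insert (by simp; omega), Finset.sum_insert (by simp; omega),
      Finset.sum_singleton, if_neg (by omega : ¬ (n - 2 = n - 1))] at en2
    have en1 := h (n - 1) (by omega) (by omega)
    rw [← Finset.sum_filter, dn_filter_n1 hn, Finset.sum_singleton, if_pos rfl] at en1
    have enn := h n (by omega) (by omega)
    rw [← Finset.sum_filter, dn_filter_nn hn, Finset.sum_singleton,
      if_neg (by omega : ¬ (n = n - 1))] at enn
    have kn2 := key (n - 2) (by omega) (by omega)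
    have kn3 := key (n - 3) (by omega) (by omega)
    rw [kn2] at en2 en1 enn
    rw [kn3] at en2
    rw [hc2] at en2 en1 enn
    rw [hc3] at en2
    have hb1 : b 1 = 1 := by linarith
    rw [hb1] at en1 enn
    refine ⟨fun i h1 h2 => by rw [key i h1 h2, hb1, mul_one], by linarith, by linarith⟩
  · rintro ⟨hm, h1, h2⟩ i hi1 hi2
    have hcase : i = 1 ∨ (2 ≤ i ∧ i ≤ n - 3) ∨ i = n - 2 ∨ i = n - 1 ∨ i = n := by omega
    rcases hcase with rfl | ⟨hl, hr⟩ | he | he | he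
    · rw [← Finset.sum_filter, dn_filter_one hn, Finset.sum_singleton,
        if_neg (by omega : ¬ (1 = n - 1)),
        hm 1 (by omega) (by omega), hm 2 (by omega) (by omega)]
      norm_num
    · rw [← Finset.sum_filter, dn_filter_mid hl hr,
        Finset.sum_pair (by omega : i - 1 ≠ i + 1),
        if_neg (by omega : ¬ (i = n - 1)),
        hm i (by omega) (by omega), hm (i - 1) (by omega) (by omega),
        hm (i + 1) (by omega) (by omega),
        (by rw [Nat.cast_sub (by omega)]; norm_num : ((i - 1 : ℕ) : ℚ) = (i : ℚ) - 1)]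
      push_cast
      ring
    · rw [he]
      rw [← Finset.sum_filter, dn_filter_n2 hn,
        Finset.sum_insert (by simp; omega), Finset.sum_insert (by simp; omega),
        Finset.sum_singleton, if_neg (by omega : ¬ (n - 2 = n - 1)),
        hm (n - 2) (by omega) (by omega), hm (n - 3) (by omega) (by omega),
        h1, h2, hc2, hc3]
      ring
    · rw [he]
      rw [← Finset.sum_filter, dn_filter_n1 hn, Finset.sum_singleton, if_pos rfl,
        hm (n - 2) (by omega) (by omega), h1, hc2]
      ring
    · rw [he]
      rw [← Finset.sum_filter, dn_filter_nn hn, Finset.sum_singleton,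
        if_neg (by omega : ¬ (n = n - 1)),
        hm (n - 2) (by omega) (by omega), h2, hc2]
      ring
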